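/- Let χ₁, χ₂ be Dirichlet characters modulo N₁, N₂ with values in ℂ, let k ≥ 2 be an integer, and let K be the subfield of ℂ generated over ℚ by the set of all Fourier coefficients {σ_{χ₁,χ₂}^{k-1}(n) : n ≥ 1}. Then K is a finite extension of ℚ, K is a Galois extension of ℚ, and the Galois group of K over ℚ (the group of ℚ-algebra automorphisms of K) is abelian. -/

import Mathlib

open IntermediateField Polynomial

set_option synthInstance.maxHeartbeats 400000
set_option maxHeartbeats 4000000

/-- Values of a Dirichlet character are `0` or roots of unity of uniformly bounded order. -/
lemma dirichlet_value_pow_aux {N : ℕ} (χ : DirichletCharacter ℂ N) (a : ZMod N) :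
    χ a = 0 ∨ (χ a) ^ Monoid.exponent (ZMod N)ˣ = 1 := by
  by_cases h : IsUnit a
  · right
    obtain ⟨u, rfl⟩ := h
    rw [← map_pow, ← Units.val_pow_eq_pow_val, Monoid.pow_exponent_eq_one, Units.val_one, map_one]
  · exact Or.inl (χ.map_nonunit h)

/-- Any subfield of a cyclotomic field is a finite abelian Galois extension of `ℚ`. -/
lemma key_galois_aux (M : ℕ) (hM : 0 < M) (ζ : ℂ) (hζ : IsPrimitiveRoot ζ M)
    (K : IntermediateField ℚ ℂ) (hKC : K ≤ IntermediateField.adjoin ℚ {ζ}) :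
    FiniteDimensional ℚ K ∧ IsGalois ℚ K ∧
      ∀ σ τ : K ≃ₐ[ℚ] K, σ * τ = τ * σ := by
  set n : ℕ+ := ⟨M, hM⟩ with hn
  set C : IntermediateField ℚ ℂ := IntermediateField.adjoin ℚ {ζ} with hC
  have hint : IsIntegral ℚ ζ := (hζ.isIntegral hM).tower_top
  have hsub : C.toSubalgebra = Algebra.adjoin ℚ {ζ} :=
    IntermediateField.adjoin_simple_toSubalgebra_of_isAlgebraic hint.isAlgebraic
  have hζn : IsPrimitiveRoot ζ (n : ℕ) := hζ
  haveI hcyc : IsCyclotomicExtension {(n : ℕ)} ℚ C := by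
    have h1 : IsCyclotomicExtension {(n : ℕ)} ℚ (Algebra.adjoin ℚ {ζ}) :=
      hζn.adjoin_isCyclotomicExtension ℚ
    exact IsCyclotomicExtension.equiv _ _ _ (Subalgebra.equivOfEq _ _ hsub.symm)
  have hnM : (n : ℕ) = M := rfl
  clear_value n C
  haveI hCfin : FiniteDimensional ℚ C := IsCyclotomicExtension.finiteDimensional {(n : ℕ)} ℚ C
  haveI hCgal : IsGalois ℚ C := IsCyclotomicExtension.isGalois {(n : ℕ)} ℚ C
  have hirr : Irreducible (cyclotomic (n : ℕ) ℚ) := hnM ▸ cyclotomic.irreducible_rat hM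
  have hcomm : ∀ a b : C ≃ₐ[ℚ] C, a * b = b * a := by
    intro a b
    apply (IsCyclotomicExtension.autEquivPow (n := (n : ℕ)) C hirr).injective
    rw [map_mul, map_mul, mul_comm]
  set K' : IntermediateField ℚ C := IntermediateField.restrict hKC with hK'
  have e : ↥K ≃ₐ[ℚ] ↥K' := IntermediateField.restrict_algEquiv hKC
  clear_value K'
  haveI hnorm : K'.fixingSubgroup.Normal := by
    constructor
    intro x hx g
    have hgx : g * x * g⁻¹ = x := by rw [hcomm g x, mul_assoc, mul_inv_cancel, mul_one]
    rwa [hgx]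
  haveI h2 : IsGalois ℚ ↥(IntermediateField.fixedField K'.fixingSubgroup) :=
    IsGalois.of_fixedField_normal_subgroup K'.fixingSubgroup
  have hf : IntermediateField.fixedField K'.fixingSubgroup = K' :=
    IsGalois.fixedField_fixingSubgroup K'
  haveI hK'gal : IsGalois ℚ ↥K' := IsGalois.of_algEquiv (IntermediateField.equivOfEq hf)
  have hcommK' : ∀ a b : ↥K' ≃ₐ[ℚ] ↥K', a * b = b * a := by
    intro a b
    obtain ⟨a', rfl⟩ := AlgEquiv.restrictNormalHom_surjective (K₁ := ↥K') C a
    obtain ⟨b', rfl⟩ := AlgEquiv.restrictNormalHom_surjective (K₁ := ↥K') C b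
    rw [← map_mul, ← map_mul, hcomm]
  haveI hKfin : FiniteDimensional ℚ K := e.symm.toLinearEquiv.finiteDimensional
  refine ⟨hKfin, IsGalois.of_algEquiv e.symm, ?_⟩
  intro σ τ
  apply (AlgEquiv.autCongr e).injective
  rw [map_mul (AlgEquiv.autCongr e) σ τ, map_mul (AlgEquiv.autCongr e) τ σ, hcommK']

/-- The signed divisor sum `σ_{χ₁,χ₂}^{k-1}(n) = ∑_{d ∣ n} χ₁(n/d) χ₂(d) d^{k-1}`. -/
noncomputable def sigmaC {N₁ N₂ : ℕ} (χ₁ : DirichletCharacter ℂ N₁)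
    (χ₂ : DirichletCharacter ℂ N₂) (k : ℕ) (n : ℕ) : ℂ :=
  ∑ d ∈ n.divisors, χ₁ ((n / d : ℕ) : ZMod N₁) * χ₂ ((d : ℕ) : ZMod N₂) * (d : ℂ) ^ (k - 1)

/-- The field `K ⊆ ℂ` generated over `ℚ` by all Fourier coefficients
`σ_{χ₁,χ₂}^{k-1}(n)`, `n ≥ 1`, is a finite abelian Galois extension of `ℚ`. -/
theorem stmt_13 (N₁ N₂ : ℕ) (χ₁ : DirichletCharacter ℂ N₁) (χ₂ : DirichletCharacter ℂ N₂)
    (k : ℕ) (hk : 2 ≤ k)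
    (K : IntermediateField ℚ ℂ)
    (hK : K = IntermediateField.adjoin ℚ
      {z : ℂ | ∃ n : ℕ, 0 < n ∧ z = sigmaC χ₁ χ₂ k n}) :
    FiniteDimensional ℚ K ∧ IsGalois ℚ K ∧
      ∀ σ τ : K ≃ₐ[ℚ] K, σ * τ = τ * σ := by
  classical
  have h₁ : 0 < Monoid.exponent (ZMod N₁)ˣ := Monoid.ExponentExists.of_finite.exponent_pos
  have h₂ : 0 < Monoid.exponent (ZMod N₂)ˣ := Monoid.ExponentExists.of_finite.exponent_pos
  set M : ℕ := Nat.lcm (Monoid.exponent (ZMod N₁)ˣ) (Monoid.exponent (ZMod N₂)ˣ) with hMdef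
  have hM : 0 < M := Nat.pos_of_ne_zero (Nat.lcm_ne_zero h₁.ne' h₂.ne')
  haveI : NeZero M := ⟨hM.ne'⟩
  set ζ : ℂ := Complex.exp (2 * Real.pi * Complex.I / M) with hζdef
  have hζ : IsPrimitiveRoot ζ M := Complex.isPrimitiveRoot_exp M hM.ne'
  -- any M-th root of unity lies in `ℚ⟮ζ⟯`
  have hroot : ∀ z : ℂ, z ^ M = 1 → z ∈ IntermediateField.adjoin ℚ {ζ} := by
    intro z hz
    obtain ⟨i, _, rfl⟩ := hζ.eq_pow_of_pow_eq_one hz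
    exact pow_mem (IntermediateField.mem_adjoin_simple_self ℚ ζ) i
  have hval₁ : ∀ a : ZMod N₁, χ₁ a ∈ IntermediateField.adjoin ℚ ({ζ} : Set ℂ) := by
    intro a
    rcases dirichlet_value_pow_aux χ₁ a with h | h
    · rw [h]; exact zero_mem _
    · refine hroot _ ?_
      obtain ⟨c, hc⟩ := Nat.dvd_lcm_left (Monoid.exponent (ZMod N₁)ˣ) (Monoid.exponent (ZMod N₂)ˣ)
      rw [show M = Monoid.exponent (ZMod N₁)ˣ * c from hc, pow_mul, h, one_pow]
  have hval₂ : ∀ a : ZMod N₂, χ₂ a ∈ IntermediateField.adjoin ℚ ({ζ} : Set ℂ) := by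
    intro a
    rcases dirichlet_value_pow_aux χ₂ a with h | h
    · rw [h]; exact zero_mem _
    · refine hroot _ ?_
      obtain ⟨c, hc⟩ := Nat.dvd_lcm_right (Monoid.exponent (ZMod N₁)ˣ) (Monoid.exponent (ZMod N₂)ˣ)
      rw [show M = Monoid.exponent (ZMod N₂)ˣ * c from hc, pow_mul, h, one_pow]
  have hKC : K ≤ IntermediateField.adjoin ℚ ({ζ} : Set ℂ) := by
    rw [hK]
    refine IntermediateField.adjoin_le_iff.mpr ?_
    rintro z ⟨m, -, rfl⟩
    refine sum_mem fun d _ => ?_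
    exact mul_mem (mul_mem (hval₁ _) (hval₂ _))
      (pow_mem (IntermediateField.natCast_mem _ d) _)
  exact key_galois_aux M hM ζ hζ K hKC
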